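/- Let m ≥ 2 and n be positive integers and let 0 ≤ k ≤ m − 1. Define the m-linear form T : ℓ_m^n × ⋯ × ℓ_m^n → 𝕂 by T(x^{(1)}, …, x^{(m)}) = x_1^{(1)} ⋯ x_1^{(k)} · Σ_{j=1}^n x_j^{(k+1)} ⋯ x_j^{(m)} (the first k arguments contribute their first coordinate, the remaining m − k arguments are summed along the diagonal). Then ‖T‖ = n^{k/m}. In particular, the diagonal form Σ_{j=1}^n x_j^{(1)} ⋯ x_j^{(m)} has norm 1. -/

import Mathlib

open scoped ENNReal
open Finset

/-- Generalized Hölder inequality with equal exponents, normalized form. -/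
lemma key_holder {ι : Type*} (s : Finset ι) (n : ℕ) (p : ℝ)
    (hs : 0 < s.card) (hp : (s.card : ℝ) ≤ p) (f : ι → Fin n → ℝ)
    (hf : ∀ i j, 0 ≤ f i j) (hnorm : ∀ i ∈ s, ∑ j, f i j ^ p = 1) :
    ∑ j, ∏ i ∈ s, f i j ≤ (n : ℝ) ^ (1 - (s.card : ℝ) / p) := by
  have hr : (0:ℝ) < (s.card : ℝ) := by exact_mod_cast hs
  have hp0 : (0:ℝ) < p := lt_of_lt_of_le hr hp
  set q : ℝ := p / (s.card : ℝ) with hq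
  have hq1 : (1:ℝ) ≤ q := (one_le_div hr).2 hp
  have hq0 : (0:ℝ) < q := lt_of_lt_of_le one_pos hq1
  have hgnonneg : ∀ j, 0 ≤ ∏ i ∈ s, f i j := fun j => prod_nonneg fun i _ => hf i j
  have hgq : ∑ j, (∏ i ∈ s, f i j) ^ q ≤ 1 := by
    have step : ∀ j, (∏ i ∈ s, f i j) ^ q ≤ ∑ i ∈ s, ((s.card:ℝ))⁻¹ * (f i j ^ p) := by
      intro j
      have hAM := Real.geom_mean_le_arith_mean_weighted s (fun _ => ((s.card:ℝ))⁻¹)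
        (fun i => f i j ^ p) (fun i _ => inv_nonneg.2 hr.le)
        (by rw [Finset.sum_const, nsmul_eq_mul, mul_inv_cancel₀ hr.ne'])
        (fun i _ => Real.rpow_nonneg (hf i j) p)
      calc (∏ i ∈ s, f i j) ^ q
          = ∏ i ∈ s, (f i j ^ p) ^ ((s.card:ℝ))⁻¹ := by
            rw [← Real.finset_prod_rpow s _ (fun i _ => hf i j) q]
            refine Finset.prod_congr rfl fun i _ => ?_
            rw [← Real.rpow_mul (hf i j), hq, div_eq_mul_inv]
          _ ≤ _ := hAM
    calc ∑ j, (∏ i ∈ s, f i j) ^ q ≤ ∑ j, ∑ i ∈ s, ((s.card:ℝ))⁻¹ * (f i j ^ p) :=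
          Finset.sum_le_sum fun j _ => step j
      _ = ∑ i ∈ s, ((s.card:ℝ))⁻¹ * ∑ j, f i j ^ p := by
          rw [Finset.sum_comm]
          exact Finset.sum_congr rfl fun i _ => by rw [Finset.mul_sum]
      _ = 1 := by
          rw [Finset.sum_congr rfl fun i hi => by rw [hnorm i hi, mul_one]]
          rw [Finset.sum_const, nsmul_eq_mul, mul_inv_cancel₀ hr.ne']
  have h1 := Real.inner_le_weight_mul_Lp_of_nonneg Finset.univ hq1 (fun _ : Fin n => (1:ℝ))
    (fun j => ∏ i ∈ s, f i j) (fun _ => zero_le_one) hgnonneg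
  simp only [one_mul, Finset.sum_const, Finset.card_univ, Fintype.card_fin, nsmul_eq_mul,
    mul_one] at h1
  have h2 : ((∑ j, (∏ i ∈ s, f i j) ^ q) : ℝ) ^ q⁻¹ ≤ 1 := by
    rw [show (1:ℝ) = 1 ^ q⁻¹ by rw [Real.one_rpow]]
    exact Real.rpow_le_rpow (Finset.sum_nonneg fun j _ => Real.rpow_nonneg (hgnonneg j) q)
      hgq (by positivity)
  have h3 : (1:ℝ) - q⁻¹ = 1 - (s.card : ℝ) / p := by
    rw [hq]; rw [inv_div]
  calc ∑ j, ∏ i ∈ s, f i j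
      ≤ ((n:ℝ)) ^ (1 - q⁻¹) * (∑ j, (∏ i ∈ s, f i j) ^ q) ^ q⁻¹ := h1
    _ ≤ ((n:ℝ)) ^ (1 - q⁻¹) * 1 :=
        mul_le_mul_of_nonneg_left h2 (Real.rpow_nonneg (Nat.cast_nonneg n) _)
    _ = (n : ℝ) ^ (1 - (s.card : ℝ) / p) := by rw [mul_one, h3]

/-- **Norms of the truncated diagonal forms.**
For `m ≥ 2`, `n ≥ 1` and `0 ≤ k ≤ m−1`, the `m`-linear form
`T(x^{(1)},…,x^{(m)}) = x_1^{(1)} ⋯ x_1^{(k)} · Σ_{j=1}^n x_j^{(k+1)} ⋯ x_j^{(m)}`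
on `ℓ_m^n × ⋯ × ℓ_m^n` has norm `‖T‖ = n^{k/m}`.  (In particular, for `k = 0` the
diagonal form has norm `1`.) -/
theorem norm_truncated_diagonal_form (𝕂 : Type*) [RCLike 𝕂] (m n k : ℕ) (hm : 2 ≤ m)
    (hn : 0 < n) (hk : k ≤ m - 1) :
    haveI : Fact ((1 : ℝ≥0∞) ≤ (m : ℝ≥0∞)) := ⟨by exact_mod_cast (by omega : 1 ≤ m)⟩
    ∀ T : ContinuousMultilinearMap 𝕂
        (fun _ : Fin m => PiLp (m : ℝ≥0∞) (fun _ : Fin n => 𝕂)) 𝕂,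
      (∀ x : Fin m → PiLp (m : ℝ≥0∞) (fun _ : Fin n => 𝕂),
          T x = (∏ i ∈ Finset.univ.filter (fun i : Fin m => (i : ℕ) < k), x i ⟨0, hn⟩) *
            ∑ j : Fin n, ∏ i ∈ Finset.univ.filter (fun i : Fin m => ¬ (i : ℕ) < k), x i j) →
        ‖T‖ = (n : ℝ) ^ ((k : ℝ) / (m : ℝ)) := by
  haveI : Fact ((1 : ℝ≥0∞) ≤ (m : ℝ≥0∞)) := ⟨by exact_mod_cast (by omega : 1 ≤ m)⟩
  intro T hT
  classical
  set p : ℝ := (m : ℝ) with hpdef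
  have hklt : k < m := by omega
  have hp0 : (0:ℝ) < p := by rw [hpdef]; exact_mod_cast (by omega : 0 < m)
  have hpne : p ≠ 0 := hp0.ne'
  have hn0 : (0:ℝ) < (n:ℝ) := by exact_mod_cast hn
  have htr : ((m : ℝ≥0∞)).toReal = p := by simp [hpdef]
  have hnormeq : ∀ y : PiLp (m : ℝ≥0∞) (fun _ : Fin n => 𝕂),
      ‖y‖ = (∑ j, ‖y j‖ ^ p) ^ (1/p) := by
    intro y
    rw [PiLp.norm_eq_sum (by rw [htr]; exact hp0) y, htr]
  set sc := Finset.univ.filter (fun i : Fin m => (i : ℕ) < k) with hscdef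
  set s := Finset.univ.filter (fun i : Fin m => ¬ (i : ℕ) < k) with hsdef
  have hsc_card : sc.card = k := by
    rw [hscdef]
    have heq : Finset.univ.filter (fun i : Fin m => (i : ℕ) < k)
        = Finset.univ.map (Fin.castLEEmb hklt.le) := by
      ext i
      simp only [mem_filter, mem_univ, true_and, mem_map, Fin.castLEEmb_apply]
      constructor
      · intro h; exact ⟨⟨(i:ℕ), h⟩, by ext; simp⟩
      · rintro ⟨a, -, rfl⟩; exact a.2
    rw [heq, Finset.card_map, Finset.card_univ, Fintype.card_fin]
  have hs_card : s.card = m - k := by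
    have h := Finset.card_filter_add_card_filter_not
      (s := (Finset.univ : Finset (Fin m))) (p := fun i : Fin m => (i : ℕ) < k)
    rw [Finset.card_univ, Fintype.card_fin] at h
    rw [hsdef]
    rw [hscdef] at hsc_card
    omega
  have hscast : ((s.card : ℝ)) = p - (k:ℝ) := by
    rw [hs_card, Nat.cast_sub hklt.le, hpdef]
  have hcoord : ∀ (y : PiLp (m : ℝ≥0∞) (fun _ : Fin n => 𝕂)) (j : Fin n), ‖y j‖ ≤ ‖y‖ := by
    intro y j
    rw [hnormeq y]
    have h1 : ‖y j‖ ^ p ≤ ∑ j', ‖y j'‖ ^ p :=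
      Finset.single_le_sum (fun j' _ => Real.rpow_nonneg (norm_nonneg _) p) (mem_univ j)
    have h2 := Real.rpow_le_rpow (Real.rpow_nonneg (norm_nonneg _) p) h1
      (by positivity : (0:ℝ) ≤ 1/p)
    rwa [← Real.rpow_mul (norm_nonneg _), mul_one_div, div_self hpne, Real.rpow_one] at h2
  have hsum_eq : ∀ (y : PiLp (m : ℝ≥0∞) (fun _ : Fin n => 𝕂)),
      ∑ j, ‖y j‖ ^ p = ‖y‖ ^ p := by
    intro y
    have hS : (0:ℝ) ≤ ∑ j, ‖y j‖ ^ p :=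
      Finset.sum_nonneg fun j _ => Real.rpow_nonneg (norm_nonneg _) p
    rw [hnormeq y, ← Real.rpow_mul hS, one_div, inv_mul_cancel₀ hpne, Real.rpow_one]
  refine le_antisymm (ContinuousMultilinearMap.opNorm_le_bound (by positivity) ?_) ?_
  · -- upper bound
    intro x
    by_cases hx : ∀ i, x i ≠ 0
    · have hxpos : ∀ i, (0:ℝ) < ‖x i‖ := fun i => norm_pos_iff.2 (hx i)
      rw [hT x]
      set f : Fin m → Fin n → ℝ := fun i j => ‖x i j‖ / ‖x i‖ with hfdef
      have hfnn : ∀ i j, 0 ≤ f i j := fun i j => div_nonneg (norm_nonneg _) (norm_nonneg _)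
      have hfnorm : ∀ i ∈ s, ∑ j, f i j ^ p = 1 := by
        intro i _
        have hstep : ∑ j, f i j ^ p = (∑ j, ‖x i j‖ ^ p) / ‖x i‖ ^ p := by
          rw [Finset.sum_div]
          exact Finset.sum_congr rfl fun j _ => by
            rw [hfdef, Real.div_rpow (norm_nonneg _) (norm_nonneg _)]
        rw [hstep, hsum_eq (x i), div_self (Real.rpow_pos_of_pos (hxpos i) p).ne']
      have hspos : 0 < s.card := by omega
      have hsle : (s.card : ℝ) ≤ p := by
        rw [hscast]
        have hk0 : (0:ℝ) ≤ (k:ℝ) := Nat.cast_nonneg k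
        linarith
      have hkey := key_holder s n p hspos hsle f hfnn hfnorm
      have hexp : 1 - (s.card:ℝ)/p = (k:ℝ)/p := by
        rw [hscast]; field_simp; ring
      rw [hexp] at hkey
      have hb1 : ‖∏ i ∈ sc, x i ⟨0,hn⟩‖ ≤ ∏ i ∈ sc, ‖x i‖ := by
        rw [norm_prod]
        exact Finset.prod_le_prod (fun i _ => norm_nonneg _) (fun i _ => hcoord (x i) ⟨0,hn⟩)
      have hb2 : ‖∑ j, ∏ i ∈ s, x i j‖ ≤ ∑ j, ∏ i ∈ s, ‖x i j‖ := by
        refine (norm_sum_le _ _).trans (Finset.sum_le_sum fun j _ => ?_)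
        rw [norm_prod]
      have hfs : ∀ j, ∏ i ∈ s, ‖x i j‖ = (∏ i ∈ s, ‖x i‖) * ∏ i ∈ s, f i j := by
        intro j
        rw [← Finset.prod_mul_distrib]
        exact Finset.prod_congr rfl fun i _ => by
          rw [hfdef, mul_comm, div_mul_cancel₀ _ (hxpos i).ne']
      calc ‖(∏ i ∈ sc, x i ⟨0,hn⟩) * ∑ j, ∏ i ∈ s, x i j‖
          = ‖∏ i ∈ sc, x i ⟨0,hn⟩‖ * ‖∑ j, ∏ i ∈ s, x i j‖ := norm_mul _ _
        _ ≤ (∏ i ∈ sc, ‖x i‖) * ∑ j, ∏ i ∈ s, ‖x i j‖ := by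
            refine mul_le_mul hb1 hb2 (norm_nonneg _) (Finset.prod_nonneg fun i _ => norm_nonneg _)
        _ = (∏ i ∈ sc, ‖x i‖) * ((∏ i ∈ s, ‖x i‖) * ∑ j, ∏ i ∈ s, f i j) := by
            rw [Finset.sum_congr rfl fun j _ => hfs j, ← Finset.mul_sum]
        _ ≤ (∏ i ∈ sc, ‖x i‖) * ((∏ i ∈ s, ‖x i‖) * (n:ℝ) ^ ((k:ℝ)/p)) := by
            refine mul_le_mul_of_nonneg_left (mul_le_mul_of_nonneg_left hkey
              (Finset.prod_nonneg fun i _ => norm_nonneg _))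
              (Finset.prod_nonneg fun i _ => norm_nonneg _)
        _ = (n:ℝ) ^ ((k:ℝ)/p) * ∏ i, ‖x i‖ := by
            rw [← Finset.prod_filter_mul_prod_filter_not Finset.univ
              (fun i : Fin m => (i : ℕ) < k) (fun i => ‖x i‖)]
            rw [← hscdef, ← hsdef]; ring
    · push_neg at hx
      obtain ⟨i, hi⟩ := hx
      rw [T.map_coord_zero i hi, norm_zero]
      positivity
  · -- lower bound
    set c : ℝ := (n:ℝ) ^ (-(1:ℝ)/p) with hcdef
    have hc0 : (0:ℝ) ≤ c := Real.rpow_nonneg hn0.le _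
    set y : ∀ _ : Fin m, PiLp (m : ℝ≥0∞) (fun _ : Fin n => 𝕂) :=
      fun i => if (i : ℕ) < k then WithLp.toLp (m : ℝ≥0∞) (fun j => if j = ⟨0,hn⟩ then (1:𝕂) else 0)
        else WithLp.toLp (m : ℝ≥0∞) (fun _ => ((c : ℝ) : 𝕂)) with hydef
    have hy1 : ∀ i : Fin m, (i : ℕ) < k → ∀ j, y i j = if j = ⟨0,hn⟩ then (1:𝕂) else 0 := by
      intro i h j; rw [hydef]; simp only [if_pos h, PiLp.toLp_apply]
    have hy2 : ∀ i : Fin m, ¬ (i : ℕ) < k → ∀ j, y i j = ((c : ℝ) : 𝕂) := by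
      intro i h j; rw [hydef]; simp only [if_neg h, PiLp.toLp_apply]
    have hcp : c ^ p = (n:ℝ)⁻¹ := by
      rw [hcdef, ← Real.rpow_mul hn0.le, div_mul_cancel₀ _ hpne, Real.rpow_neg_one]
    have hynorm : ∀ i, ‖y i‖ = 1 := by
      intro i
      rw [hnormeq (y i)]
      by_cases h : (i : ℕ) < k
      · have hterm : ∀ j : Fin n, ‖y i j‖ ^ p = if j = ⟨0,hn⟩ then 1 else 0 := by
          intro j
          rw [hy1 i h j]
          split
          · rw [norm_one, Real.one_rpow]
          · rw [norm_zero, Real.zero_rpow hpne]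
        rw [Finset.sum_congr rfl fun j _ => hterm j]
        rw [Finset.sum_ite_eq' Finset.univ (⟨0,hn⟩ : Fin n) (fun _ => (1:ℝ))]
        rw [if_pos (mem_univ _), Real.one_rpow]
      · have hterm : ∀ j : Fin n, ‖y i j‖ ^ p = c ^ p := by
          intro j
          rw [hy2 i h j, RCLike.norm_ofReal, abs_of_nonneg hc0]
        rw [Finset.sum_congr rfl fun j _ => hterm j, Finset.sum_const, Finset.card_univ,
          Fintype.card_fin, nsmul_eq_mul, hcp, mul_inv_cancel₀ hn0.ne', Real.one_rpow]
    have hval : T y = (((n:ℝ) * c ^ (m - k) : ℝ) : 𝕂) := by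
      rw [hT y]
      have hprod1 : (∏ i ∈ sc, y i ⟨0,hn⟩) = 1 := by
        refine Finset.prod_eq_one fun i hi => ?_
        rw [hscdef] at hi
        rw [hy1 i (by simpa using hi) ⟨0,hn⟩, if_pos rfl]
      have hprod2 : ∀ j : Fin n, (∏ i ∈ s, y i j) = ((c:ℝ):𝕂) ^ (m - k) := by
        intro j
        rw [Finset.prod_congr rfl fun i hi => hy2 i (by rw [hsdef] at hi; simpa using hi) j]
        rw [Finset.prod_const, hs_card]
      rw [hprod1, Finset.sum_congr rfl fun j _ => hprod2 j,
        Finset.sum_const, Finset.card_univ, Fintype.card_fin, nsmul_eq_mul, one_mul]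
      push_cast
      ring
    have hTy : ‖T y‖ = (n:ℝ) * c ^ (m - k) := by
      rw [hval, RCLike.norm_ofReal, abs_of_nonneg (by positivity)]
    have hvalue : (n:ℝ) * c ^ (m - k) = (n:ℝ) ^ ((k:ℝ)/p) := by
      rw [hcdef, ← Real.rpow_natCast ((n:ℝ) ^ (-(1:ℝ)/p)) (m - k), ← Real.rpow_mul hn0.le]
      rw [show (n:ℝ) * (n:ℝ) ^ (-(1:ℝ)/p * ((m - k : ℕ):ℝ))
          = (n:ℝ) ^ ((1:ℝ) + -(1:ℝ)/p * ((m - k : ℕ):ℝ)) by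
        rw [Real.rpow_add hn0, Real.rpow_one]]
      congr 1
      rw [Nat.cast_sub hklt.le, hpdef]
      field_simp
      ring
    have hle := T.le_opNorm y
    rw [hTy, hvalue, Finset.prod_congr rfl fun i _ => hynorm i, Finset.prod_const_one,
      mul_one] at hle
    exact hle
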